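/- For 0 ≤ i ≤ n, define the polynomial G_i(x,y) = (1/(i!·(n−i)!)) · (∏_{k=0}^{i−1}(x−α−k)) · (∏_{k=0}^{n−i−1}(y−k)) ∈ ℚ[x,y]. Then G_0, G_1, …, G_n form a basis of the ℚ-vector space { f ∈ ℚ[x,y] : f has total degree ≤ n and f(q) = 0 for all q ∈ Q }; in particular, this space has dimension n+1. -/
import Mathlib


/-- The interpolation polynomial
`G_i(x,y) = (1/(i!(n-i)!)) ∏_{k=0}^{i-1}(x-α-k) ∏_{k=0}^{n-i-1}(y-k)`. -/
noncomputable def Gpoly (n α : ℕ) (i : ℕ) : MvPolynomial (Fin 2) ℚ :=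
  MvPolynomial.C (1 / ((Nat.factorial i : ℚ) * (Nat.factorial (n - i) : ℚ))) *
    (∏ k ∈ Finset.range i, (MvPolynomial.X 0 - MvPolynomial.C ((α : ℚ) + (k : ℚ)))) *
    (∏ k ∈ Finset.range (n - i), (MvPolynomial.X 1 - MvPolynomial.C (k : ℚ)))

open MvPolynomial Finset

noncomputable def Bp (α : ℕ) (i j : ℕ) : MvPolynomial (Fin 2) ℚ :=
  (∏ k ∈ Finset.range i, (X 0 - C ((α : ℚ) + (k : ℚ)))) *
    (∏ k ∈ Finset.range j, (X 1 - C ((k : ℚ))))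

lemma evalB (α a b i j : ℕ) :
    MvPolynomial.eval ![(α : ℚ) + a, (b : ℚ)] (Bp α i j) =
      (∏ k ∈ range i, ((a : ℚ) - k)) * (∏ k ∈ range j, ((b : ℚ) - k)) := by
  simp only [Bp, map_mul, map_prod, map_sub, eval_X, eval_C]
  simp only [Matrix.cons_val_zero, Matrix.cons_val_one, Matrix.head_cons]
  congr 1 <;> exact Finset.prod_congr rfl (by intros; ring)

lemma prodfac (a : ℕ) : (∏ k ∈ range a, ((a : ℚ) - k)) = a.factorial := by
  have h1 : (∏ k ∈ range a, ((a : ℚ) - k)) = ((∏ k ∈ range a, (a - k) : ℕ) : ℚ) := by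
    push_cast [Nat.cast_prod]
    exact Finset.prod_congr rfl fun k hk => by
      rw [Nat.cast_sub (le_of_lt (mem_range.mp hk))]
  rw [h1]
  norm_cast
  rw [← Finset.prod_range_reflect]
  rw [← Finset.prod_range_add_one_eq_factorial]
  exact Finset.prod_congr rfl fun k hk => by
    have := mem_range.mp hk; omega

lemma prodzero (a i : ℕ) (h : a < i) : (∏ k ∈ range i, ((a : ℚ) - k)) = 0 :=
  Finset.prod_eq_zero (mem_range.mpr h) (by simp)

lemma degB (α i j : ℕ) : (Bp α i j).totalDegree ≤ i + j := by
  apply le_trans (totalDegree_mul _ _)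
  gcongr <;>
  · apply le_trans (totalDegree_finset_prod _ _)
    apply le_trans (Finset.sum_le_card_nsmul _ _ 1 ?_) (by simp)
    intro k _
    refine le_trans (totalDegree_sub _ _) (max_le ?_ ?_)
    · exact le_of_eq (totalDegree_X _)
    · rw [totalDegree_C]; norm_num

lemma Bp_eq_sum (α p q : ℕ) :
    ∃ u v : ℕ → ℚ, u p = 1 ∧ v q = 1 ∧
      Bp α p q = ∑ ij ∈ range (p+1) ×ˢ range (q+1),
        C (u ij.1 * v ij.2) * (X 0 ^ ij.1 * X 1 ^ ij.2) := by
  set U : Polynomial ℚ := ∏ k ∈ range p, (Polynomial.X - Polynomial.C ((α : ℚ) + k)) with hU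
  set V : Polynomial ℚ := ∏ k ∈ range q, (Polynomial.X - Polynomial.C ((k : ℚ))) with hV
  have hUm : U.Monic := Polynomial.monic_prod_of_monic _ _ fun k _ => Polynomial.monic_X_sub_C _
  have hVm : V.Monic := Polynomial.monic_prod_of_monic _ _ fun k _ => Polynomial.monic_X_sub_C _
  have hUd : U.natDegree = p := by
    rw [hU, Polynomial.natDegree_prod]
    · simp only [Polynomial.natDegree_X_sub_C, Finset.sum_const, smul_eq_mul, mul_one,
        Finset.card_range]
    · exact fun k _ => Polynomial.X_sub_C_ne_zero _
  have hVd : V.natDegree = q := by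
    rw [hV, Polynomial.natDegree_prod]
    · simp only [Polynomial.natDegree_X_sub_C, Finset.sum_const, smul_eq_mul, mul_one,
        Finset.card_range]
    · exact fun k _ => Polynomial.X_sub_C_ne_zero _
  refine ⟨fun i => U.coeff i, fun j => V.coeff j, ?_, ?_, ?_⟩
  · rw [← hUd]; exact hUm.coeff_natDegree
  · rw [← hVd]; exact hVm.coeff_natDegree
  · have key : ∀ (W : Polynomial ℚ) (r : ℕ) (z : MvPolynomial (Fin 2) ℚ), W.natDegree < r →
        Polynomial.aeval z W = ∑ i ∈ range r, C (W.coeff i) * z ^ i := by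
      intro W r z hr
      conv_lhs => rw [W.as_sum_range' r hr]
      rw [map_sum]
      exact Finset.sum_congr rfl fun i _ => by
        rw [Polynomial.aeval_monomial, MvPolynomial.algebraMap_eq]
    have h1 : (∏ k ∈ Finset.range p, (X 0 - C ((α : ℚ) + (k : ℚ)))) =
        Polynomial.aeval (X 0 : MvPolynomial (Fin 2) ℚ) U := by
      rw [hU, map_prod]
      exact Finset.prod_congr rfl fun k _ => by
        rw [map_sub, Polynomial.aeval_X, Polynomial.aeval_C, MvPolynomial.algebraMap_eq]
    have h2 : (∏ k ∈ Finset.range q, (X 1 - C ((k : ℚ)))) =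
        Polynomial.aeval (X 1 : MvPolynomial (Fin 2) ℚ) V := by
      rw [hV, map_prod]
      exact Finset.prod_congr rfl fun k _ => by
        rw [map_sub, Polynomial.aeval_X, Polynomial.aeval_C, MvPolynomial.algebraMap_eq]
    rw [Bp, h1, h2, key U (p+1) _ (by omega), key V (q+1) _ (by omega),
      Finset.sum_mul_sum, Finset.sum_product]
    exact Finset.sum_congr rfl fun i _ => Finset.sum_congr rfl fun j _ => by
      rw [C_mul]; ring

noncomputable def Ifin (n : ℕ) : Finset (ℕ × ℕ) :=
  (range (n+1) ×ˢ range (n+1)).filter (fun ij => ij.1 + ij.2 ≤ n)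

lemma mem_Ifin {n : ℕ} {ij : ℕ × ℕ} (h : ij.1 + ij.2 ≤ n) : ij ∈ Ifin n := by
  simp only [Ifin, Finset.mem_filter, Finset.mem_product, Finset.mem_range]
  omega

lemma mono_mem_span (n α : ℕ) : ∀ m p q : ℕ, p + q ≤ m → p + q ≤ n →
    (X 0 ^ p * X 1 ^ q : MvPolynomial (Fin 2) ℚ) ∈
      Submodule.span ℚ ((fun ij : ℕ × ℕ => Bp α ij.1 ij.2) '' ↑(Ifin n)) := by
  intro m
  induction m using Nat.strong_induction_on with
  | _ m ih =>
    intro p q hm hn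
    obtain ⟨u, v, hu, hv, hB⟩ := Bp_eq_sum α p q
    have hpq : ((p, q) : ℕ × ℕ) ∈ range (p+1) ×ˢ range (q+1) := by simp
    have key : (X 0 ^ p * X 1 ^ q : MvPolynomial (Fin 2) ℚ) = Bp α p q -
        ∑ ij ∈ (range (p+1) ×ˢ range (q+1)).erase (p, q),
          C (u ij.1 * v ij.2) * (X 0 ^ ij.1 * X 1 ^ ij.2) := by
      rw [hB, ← Finset.add_sum_erase _ _ hpq]
      simp [hu, hv]
    rw [key]
    apply sub_mem
    · exact Submodule.subset_span ⟨(p, q), mem_Ifin hn, rfl⟩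
    · apply Submodule.sum_mem
      intro ij hij
      obtain ⟨hne, hmem⟩ := Finset.mem_erase.mp hij
      simp only [Finset.mem_product, Finset.mem_range] at hmem
      have hne' : ij.1 ≠ p ∨ ij.2 ≠ q := by
        by_contra h; push_neg at h
        exact hne (Prod.ext h.1 h.2)
      have hlt : ij.1 + ij.2 < p + q := by omega
      rw [show (C (u ij.1 * v ij.2) * (X 0 ^ ij.1 * X 1 ^ ij.2) : MvPolynomial (Fin 2) ℚ)
          = (u ij.1 * v ij.2) • (X 0 ^ ij.1 * X 1 ^ ij.2) from (MvPolynomial.smul_eq_C_mul _ _).symm]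
      exact Submodule.smul_mem _ _ (ih (ij.1 + ij.2) (by omega) ij.1 ij.2 le_rfl (by omega))

lemma poly_mem_span (n α : ℕ) (f : MvPolynomial (Fin 2) ℚ) (hf : f.totalDegree ≤ n) :
    f ∈ Submodule.span ℚ ((fun ij : ℕ × ℕ => Bp α ij.1 ij.2) '' ↑(Ifin n)) := by
  rw [f.as_sum]
  apply Submodule.sum_mem
  intro d hd
  have hdeg : d 0 + d 1 ≤ n := by
    have h1 := MvPolynomial.le_totalDegree hd
    have h2 : (d.sum fun _ e => e) = d 0 + d 1 := by
      rw [Finsupp.sum_fintype _ _ (fun _ => rfl), Fin.sum_univ_two]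
    omega
  have hmon : (monomial d (coeff d f) : MvPolynomial (Fin 2) ℚ) =
      (coeff d f) • (X 0 ^ (d 0) * X 1 ^ (d 1)) := by
    rw [monomial_eq, MvPolynomial.smul_eq_C_mul]
    congr 1
    rw [Finsupp.prod_fintype _ _ (fun _ => pow_zero _), Fin.prod_univ_two]
  rw [hmon]
  exact Submodule.smul_mem _ _ (mono_mem_span n α (d 0 + d 1) _ _ le_rfl hdeg)

lemma GpolyBpEq (n α i : ℕ) :
    Gpoly n α i = C (1 / ((i.factorial : ℚ) * ((n - i).factorial : ℚ))) * Bp α i (n - i) := by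
  rw [Gpoly, Bp, mul_assoc]

lemma facQ_ne (n i : ℕ) : ((i.factorial : ℚ) * ((n - i).factorial : ℚ)) ≠ 0 :=
  mul_ne_zero (Nat.cast_ne_zero.mpr i.factorial_ne_zero)
    (Nat.cast_ne_zero.mpr (n - i).factorial_ne_zero)

lemma Bp_eq_smul_G (n α i : ℕ) :
    Bp α i (n - i) = ((i.factorial : ℚ) * ((n - i).factorial : ℚ)) • Gpoly n α i := by
  rw [GpolyBpEq, MvPolynomial.smul_eq_C_mul, ← mul_assoc, ← C_mul,
    mul_one_div, div_self (facQ_ne n i), C_1, one_mul]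

lemma evalG (n α a b i : ℕ) :
    MvPolynomial.eval ![(α : ℚ) + a, (b : ℚ)] (Gpoly n α i) =
      (1 / ((i.factorial : ℚ) * ((n - i).factorial : ℚ))) *
        ((∏ k ∈ range i, ((a : ℚ) - k)) * (∏ k ∈ range (n - i), ((b : ℚ) - k))) := by
  rw [GpolyBpEq, map_mul, eval_C, evalB]

lemma evalG_diag (n α i j : ℕ) (hi : i ≤ n) (hj : j ≤ n) :
    MvPolynomial.eval ![(α : ℚ) + j, ((n - j : ℕ) : ℚ)] (Gpoly n α i) =
      if i = j then 1 else 0 := by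
  rw [evalG]
  by_cases h : i = j
  · subst h
    rw [prodfac, prodfac, if_pos rfl, one_div, inv_mul_cancel₀ (facQ_ne n i)]
  · rw [if_neg h]
    rcases lt_or_gt_of_ne h with hlt | hgt
    · rw [prodzero (n - j) (n - i) (by omega)]; ring
    · rw [prodzero j i (by omega)]; ring


/-- `G_0, …, G_n` form a basis of the space of polynomials of
total degree `≤ n` vanishing at all the points of
`Q = {(α+i, j) : 0 ≤ i ≤ n-1, 0 ≤ j ≤ n-1-i}`: each `G_i` lies in this space,
they are linearly independent, and every member of the space is a linear
combination of them (so the space has dimension `n+1`). -/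
theorem Gpoly_basis (n α β : ℕ) (hn : 1 ≤ n) (hα : 1 ≤ α) :
    (∀ i ≤ n, (Gpoly n α i).totalDegree ≤ n ∧
        ∀ a b : ℕ, a + b ≤ n - 1 →
          MvPolynomial.eval ![(α : ℚ) + (a : ℚ), (b : ℚ)] (Gpoly n α i) = 0) ∧
    LinearIndependent ℚ (fun i : Fin (n + 1) => Gpoly n α (i : ℕ)) ∧
    (∀ f : MvPolynomial (Fin 2) ℚ, f.totalDegree ≤ n →
        (∀ a b : ℕ, a + b ≤ n - 1 →
          MvPolynomial.eval ![(α : ℚ) + (a : ℚ), (b : ℚ)] f = 0) →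
        ∃ c : Fin (n + 1) → ℚ, f = ∑ i : Fin (n + 1), c i • Gpoly n α (i : ℕ)) := by
  refine ⟨?_, ?_, ?_⟩
  · -- membership
    intro i hi
    constructor
    · rw [GpolyBpEq]
      refine le_trans (totalDegree_mul _ _) ?_
      have h1 := degB α i (n - i)
      have h2 : (C (1 / ((i.factorial : ℚ) * ((n - i).factorial : ℚ))) :
          MvPolynomial (Fin 2) ℚ).totalDegree = 0 := totalDegree_C _
      omega
    · intro a b hab
      rw [evalG]
      by_cases h : a < i
      · rw [prodzero a i h]; ring
      · rw [prodzero b (n - i) (by omega)]; ring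
  · -- linear independence
    rw [Fintype.linearIndependent_iff]
    intro g hg j
    have := congrArg (MvPolynomial.eval ![(α : ℚ) + (j : ℕ), ((n - (j : ℕ) : ℕ) : ℚ)]) hg
    rw [map_sum, map_zero] at this
    have hsum : ∀ i : Fin (n + 1),
        MvPolynomial.eval ![(α : ℚ) + (j : ℕ), ((n - (j : ℕ) : ℕ) : ℚ)]
          (g i • Gpoly n α (i : ℕ)) = if i = j then g i else 0 := by
      intro i
      rw [MvPolynomial.smul_eq_C_mul, map_mul, eval_C,
        evalG_diag n α i j (by omega) (by omega)]
      simp only [Fin.val_eq_val]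
      split <;> ring
    rw [Finset.sum_congr rfl fun i _ => hsum i] at this
    rw [Finset.sum_ite_eq' Finset.univ j (fun i => g i)] at this
    · simpa using this
  · -- spanning
    intro f hdeg hvan
    have hsp := poly_mem_span n α f hdeg
    rw [Finsupp.mem_span_image_iff_linearCombination] at hsp
    obtain ⟨l, hls, hlf⟩ := hsp
    rw [Finsupp.linearCombination_apply, Finsupp.sum] at hlf
    have hfs : f = ∑ ij ∈ Ifin n, l ij • Bp α ij.1 ij.2 := by
      rw [← hlf]
      refine Finset.sum_subset ?_ ?_
      · exact fun x hx => by exact_mod_cast (Finsupp.mem_supported ℚ l).mp hls hx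
      · intro x _ hx
        rw [Finsupp.notMem_support_iff.mp hx, zero_smul]
    -- coefficients with i+j ≤ n-1 vanish
    have hzero : ∀ m : ℕ, ∀ ij ∈ Ifin n, ij.1 + ij.2 = m → m ≤ n - 1 → l ij = 0 := by
      intro m
      induction m using Nat.strong_induction_on with
      | _ m ih =>
        intro ij hij hm hm'
        have hev := hvan ij.1 ij.2 (by omega)
        rw [hfs, map_sum] at hev
        have hterm : ∀ x ∈ Ifin n, x ≠ ij →
            MvPolynomial.eval ![(α : ℚ) + (ij.1 : ℚ), (ij.2 : ℚ)]
              (l x • Bp α x.1 x.2) = 0 := by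
          intro x hx hne
          rw [MvPolynomial.smul_eq_C_mul, map_mul, eval_C, evalB]
          by_cases h1 : ij.1 < x.1
          · rw [prodzero _ _ h1]; ring
          by_cases h2 : ij.2 < x.2
          · rw [prodzero _ _ h2]; ring
          have hne' : x.1 ≠ ij.1 ∨ x.2 ≠ ij.2 := by
            by_contra h; push_neg at h
            exact hne (Prod.ext h.1 h.2)
          have : x.1 + x.2 < m := by omega
          rw [ih (x.1 + x.2) this x hx rfl (by omega)]
          ring
        rw [Finset.sum_eq_single ij hterm (fun h => absurd hij h)] at hev
        rw [MvPolynomial.smul_eq_C_mul, map_mul, eval_C, evalB,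
          prodfac, prodfac] at hev
        have := facQ_ne (ij.1 + ij.2) ij.1
        simp only [Nat.add_sub_cancel_left] at this
        exact (mul_eq_zero.mp hev).resolve_right this
    -- restrict to the diagonal i+j = n
    have hdiagset : (Ifin n).filter (fun ij => ij.1 + ij.2 = n) =
        (range (n + 1)).image (fun i => (i, n - i)) := by
      ext ij
      simp only [Finset.mem_filter, Finset.mem_image, Finset.mem_range, Ifin,
        Finset.mem_product]
      constructor
      · rintro ⟨⟨h1, h2⟩, h3⟩
        exact ⟨ij.1, by omega, by rw [← h3]; simp [Prod.ext_iff]⟩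
      · rintro ⟨i, hi, rfl⟩
        simp only [Finset.mem_range]
        omega
    have hstep : f = ∑ ij ∈ (Ifin n).filter (fun ij => ij.1 + ij.2 = n),
        l ij • Bp α ij.1 ij.2 := by
      rw [hfs, Finset.sum_filter]
      refine Finset.sum_congr rfl fun ij hij => ?_
      by_cases h : ij.1 + ij.2 = n
      · rw [if_pos h]
      · have hle : ij.1 + ij.2 ≤ n := by
          have := hij; simp only [Ifin, Finset.mem_filter] at this; exact this.2
        rw [if_neg h, hzero (ij.1 + ij.2) ij hij rfl (by omega), zero_smul]
    rw [hdiagset, Finset.sum_image (fun a _ b _ h => by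
      simpa using congrArg Prod.fst h)] at hstep
    refine ⟨fun i => l ((i : ℕ), n - (i : ℕ)) *
      (((i : ℕ).factorial : ℚ) * ((n - (i : ℕ)).factorial : ℚ)), ?_⟩
    rw [hstep, ← Fin.sum_univ_eq_sum_range (fun i => l (i, n - i) • Bp α i (n - i)) (n + 1)]
    refine Finset.sum_congr rfl fun i _ => ?_
    rw [Bp_eq_smul_G n α i, smul_smul]
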